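/- For all integers d ≥ 1 and n ≥ 1, the Haar average of the n-fold tensor power of a unitary conjugating the rank-one projector onto the constant basis word equals the normalized symmetrizer: ∫ U^{⊗n} |e_{(n)}⟩⟨e_{(n)}| (U^{⊗n})^† dU = Π_{(n)} / binom(n+d−1, n), where the integral is the entrywise Bochner integral over the Haar probability measure on U(d). -/

import Mathlib

open MeasureTheory Matrix
open scoped ComplexOrder

noncomputable section

/-- The unitary group `U(d)`. -/
abbrev UG (d : ℕ) := Matrix.unitaryGroup (Fin d) ℂ

noncomputable instance (d : ℕ) : MeasurableSpace (UG d) := borel _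

instance (d : ℕ) : BorelSpace (UG d) := ⟨rfl⟩

/-- The permutation matrix `ψ(π)` on `(ℂ^d)^{⊗n}`, with `(x,y)` entry `1` iff `y = x ∘ π`. -/
def psi (d n : ℕ) (π : Equiv.Perm (Fin n)) : Matrix (Fin n → Fin d) (Fin n → Fin d) ℂ :=
  Matrix.of fun x y => if y = x ∘ π then 1 else 0

/-- The symmetrizer `Π_{(n)} = (1/n!) ∑_{π ∈ S_n} ψ(π)`. -/
def symmetrizer (d n : ℕ) : Matrix (Fin n → Fin d) (Fin n → Fin d) ℂ :=
  ((n.factorial : ℂ))⁻¹ • ∑ π : Equiv.Perm (Fin n), psi d n π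

/-- The `n`-fold tensor power of a `d × d` matrix: `(U^{⊗n})_{x,y} = ∏ i, U_{x i, y i}`. -/
def tpow (d n : ℕ) (U : Matrix (Fin d) (Fin d) ℂ) :
    Matrix (Fin n → Fin d) (Fin n → Fin d) ℂ :=
  Matrix.of fun x y => ∏ i, U (x i) (y i)

/-- The list consisting of `μ 0` copies of `0`, then `μ 1` copies of `1`, etc. -/
def wordList (d : ℕ) (μ : Fin d → ℕ) : List (Fin d) :=
  (List.ofFn fun i => List.replicate (μ i) i).flatten

lemma wordList_length (d : ℕ) (μ : Fin d → ℕ) : (wordList d μ).length = ∑ i, μ i := by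
  simp [wordList, List.length_flatten, Function.comp, List.sum_ofFn]

/-- The word indexing the basis vector `|e_μ⟩`: the first `μ 0` tensor factors carry the
first basis label, the next `μ 1` factors the second basis label, etc. -/
def word (d n : ℕ) (μ : Fin d → ℕ) (hsum : ∑ i, μ i = n) (j : Fin n) : Fin d :=
  (wordList d μ).get ⟨j, by rw [wordList_length, hsum]; exact j.isLt⟩

/-- `∫ U^{⊗n} |e_w⟩⟨e_w| (U^{⊗n})^† dq` for a basis word `w` (entrywise Bochner integral). -/
def rhoWord (d n : ℕ) (w : Fin n → Fin d) (q : Measure (UG d)) :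
    Matrix (Fin n → Fin d) (Fin n → Fin d) ℂ :=
  Matrix.of fun x y =>
    ∫ U : UG d, tpow d n (U : Matrix (Fin d) (Fin d) ℂ) x w *
      star (tpow d n (U : Matrix (Fin d) (Fin d) ℂ) y w) ∂q

/-- The Haar-twirled unequal state `ρ_≠^μ`. -/
def rhoNE (d n : ℕ) (μ : Fin d → ℕ) (hsum : ∑ i, μ i = n) (haar : Measure (UG d)) :
    Matrix (Fin n → Fin d) (Fin n → Fin d) ℂ :=
  rhoWord d n (word d n μ hsum) haar

/-- The partition `(n, 0, …, 0)`. -/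
def muEq (d n : ℕ) (hd : 0 < d) : Fin d → ℕ := fun i => if i = ⟨0, hd⟩ then n else 0

lemma muEq_sum (d n : ℕ) (hd : 0 < d) : ∑ i, muEq d n hd i = n := by
  simp [muEq]

/-- The equal state `ρ_=^n = ρ_≠^{(n,0,…,0)}`. -/
def rhoEQ (d n : ℕ) (hd : 0 < d) (haar : Measure (UG d)) :
    Matrix (Fin n → Fin d) (Fin n → Fin d) ℂ :=
  rhoNE d n (muEq d n hd) (muEq_sum d n hd) haar

/-- The set of POVM elements: Hermitian `P` with `0 ⪯ P ⪯ I`. -/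
def POVMs (d n : ℕ) : Set (Matrix (Fin n → Fin d) (Fin n → Fin d) ℂ) :=
  {P | P.PosSemidef ∧ (1 - P).PosSemidef}

/-- The average success probability of the test `{P, I - P}` with prior `p` on the equal case. -/
def successProb (d n : ℕ) (hd : 0 < d) (μ : Fin d → ℕ) (hsum : ∑ i, μ i = n)
    (haar : Measure (UG d)) (p : ℝ) (P : Matrix (Fin n → Fin d) (Fin n → Fin d) ℂ) : ℝ :=
  p * (Matrix.trace (P * rhoEQ d n hd haar)).re +
    (1 - p) * (1 - (Matrix.trace (P * rhoNE d n μ hsum haar)).re)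

/-! ### Auxiliary development -/

namespace HWAux

open Complex Finset

variable {d : ℕ}

/-- Number of occurrences of the letter `a` in the word `x`. -/
def typ {N d : ℕ} (x : Fin N → Fin d) (a : Fin d) : ℕ :=
  (Finset.univ.filter fun i => x i = a).card

lemma cont_entry (a b : Fin d) :
    Continuous fun U : UG d => (U : Matrix (Fin d) (Fin d) ℂ) a b :=
  (continuous_apply b).comp ((continuous_apply a).comp continuous_subtype_val)

lemma entry_norm_le_one (U : UG d) (a b : Fin d) :
    ‖(U : Matrix (Fin d) (Fin d) ℂ) a b‖ ≤ 1 := by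
  have h := congrFun (congrFun (Matrix.UnitaryGroup.star_mul_self U) b) b
  rw [Matrix.mul_apply] at h
  simp only [Matrix.star_apply, Matrix.one_apply_eq] at h
  have h2 : ∀ c : Fin d, star ((U : Matrix (Fin d) (Fin d) ℂ) c b) *
      (U : Matrix (Fin d) (Fin d) ℂ) c b = ((Complex.normSq ((U : Matrix (Fin d) (Fin d) ℂ) c b) : ℝ) : ℂ) := by
    intro c
    rw [Complex.star_def]
    exact Complex.normSq_eq_conj_mul_self.symm
  simp only [h2] at h
  rw [← Complex.ofReal_sum] at h
  have h3 : ∑ c, Complex.normSq ((U : Matrix (Fin d) (Fin d) ℂ) c b) = 1 := by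
    exact_mod_cast h
  have h4 : Complex.normSq ((U : Matrix (Fin d) (Fin d) ℂ) a b) ≤ 1 := by
    rw [← h3]
    exact Finset.single_le_sum (f := fun c => Complex.normSq ((U : Matrix (Fin d) (Fin d) ℂ) c b)) (fun c _ => Complex.normSq_nonneg _) (Finset.mem_univ a)
  have h5 : ‖(U : Matrix (Fin d) (Fin d) ℂ) a b‖ ^ 2 = Complex.normSq ((U : Matrix (Fin d) (Fin d) ℂ) a b) := by
    rw [Complex.sq_norm]
  nlinarith [norm_nonneg ((U : Matrix (Fin d) (Fin d) ℂ) a b)]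

lemma integrable_of_bounded {q : Measure (UG d)} [IsFiniteMeasure q] {f : UG d → ℂ}
    (hf : Continuous f) {C : ℝ} (hb : ∀ U, ‖f U‖ ≤ C) : Integrable f q :=
  (integrable_const C).mono' hf.aestronglyMeasurable (Filter.Eventually.of_forall hb)

lemma cont_mul_left (V : UG d) : Continuous fun U : UG d => V * U := by
  apply Continuous.subtype_mk
  exact continuous_const.matrix_mul continuous_subtype_val

lemma integral_comp_mul_left {q : Measure (UG d)}
    (hinv : ∀ V : UG d, Measure.map (fun U => V * U) q = q) (V : UG d)
    {f : UG d → ℂ} (hf : Continuous f) :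
    ∫ U, f (V * U) ∂q = ∫ U, f U ∂q := by
  have h1 : ∫ U, f U ∂(Measure.map (fun U => V * U) q) = ∫ U, f (V * U) ∂q :=
    MeasureTheory.integral_map (cont_mul_left V).measurable.aemeasurable
      hf.aestronglyMeasurable
  rw [← h1, hinv]

/-- The basic monomial integrand in the entries of the `c`-th column. -/
def mintegrand (c : Fin d) (p m : Fin d → ℕ) (U : UG d) : ℂ :=
  ∏ a, ((U : Matrix (Fin d) (Fin d) ℂ) a c) ^ (p a) *
    (star ((U : Matrix (Fin d) (Fin d) ℂ) a c)) ^ (m a)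

lemma cont_mintegrand (c : Fin d) (p m : Fin d → ℕ) : Continuous (mintegrand c p m) := by
  apply continuous_finset_prod
  intro a _
  exact ((cont_entry a c).pow _).mul (((cont_entry a c).star).pow _)

lemma norm_mintegrand_le_one (c : Fin d) (p m : Fin d → ℕ) (U : UG d) :
    ‖mintegrand c p m U‖ ≤ 1 := by
  rw [mintegrand, norm_prod]
  apply Finset.prod_le_one
  · intro a _; positivity
  · intro a _
    rw [norm_mul, norm_pow, norm_pow, norm_star]
    have := entry_norm_le_one U a c
    have h0 := norm_nonneg ((U : Matrix (Fin d) (Fin d) ℂ) a c)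
    calc ‖(U : Matrix (Fin d) (Fin d) ℂ) a c‖ ^ p a * ‖(U : Matrix (Fin d) (Fin d) ℂ) a c‖ ^ m a
        ≤ 1 * 1 := by
          apply mul_le_mul (pow_le_one₀ h0 this) (pow_le_one₀ h0 this) (by positivity) zero_le_one
      _ = 1 := by ring

lemma integrable_mintegrand {q : Measure (UG d)} [IsFiniteMeasure q] (c : Fin d)
    (p m : Fin d → ℕ) : Integrable (mintegrand c p m) q :=
  integrable_of_bounded (cont_mintegrand c p m) (norm_mintegrand_le_one c p m)

/-- The moment `∫ ∏ₐ u_a^{p a} (u_a)^*{}^{m a}` of the `c`-th column. -/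
def momc (q : Measure (UG d)) (c : Fin d) (p m : Fin d → ℕ) : ℂ :=
  ∫ U, mintegrand c p m U ∂q

/-- A diagonal phase unitary. -/
def phaseM (a₀ : Fin d) (θ : ℝ) : Matrix (Fin d) (Fin d) ℂ :=
  Matrix.diagonal fun a => if a = a₀ then Complex.exp (θ * Complex.I) else 1

lemma star_exp_mul_I (θ : ℝ) :
    star (Complex.exp ((θ : ℂ) * Complex.I)) = Complex.exp (-((θ : ℂ) * Complex.I)) := by
  rw [Complex.star_def, ← Complex.exp_conj]
  congr 1
  simp [Complex.conj_ofReal]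

lemma phase_mem (a₀ : Fin d) (θ : ℝ) : phaseM a₀ θ ∈ Matrix.unitaryGroup (Fin d) ℂ := by
  rw [Matrix.mem_unitaryGroup_iff]
  have hstar : star (phaseM a₀ θ) =
      Matrix.diagonal fun a => if a = a₀ then Complex.exp (-((θ : ℂ) * Complex.I)) else 1 := by
    have hfun : (star fun a => if a = a₀ then Complex.exp ((θ : ℂ) * Complex.I) else 1)
        = fun a => if a = a₀ then Complex.exp (-((θ : ℂ) * Complex.I)) else (1 : ℂ) := by
      funext a
      simp only [Pi.star_apply]
      by_cases h : a = a₀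
      · simp [h, star_exp_mul_I]
      · simp [h]
    rw [phaseM, Matrix.star_eq_conjTranspose, Matrix.diagonal_conjTranspose, hfun]
  rw [hstar, phaseM, Matrix.diagonal_mul_diagonal]
  have : (fun a => (if a = a₀ then Complex.exp ((θ : ℂ) * Complex.I) else 1) *
      (if a = a₀ then Complex.exp (-((θ : ℂ) * Complex.I)) else 1)) = fun _ => (1 : ℂ) := by
    funext a
    by_cases h : a = a₀ <;> simp [h, ← Complex.exp_add]
  rw [this, Matrix.diagonal_one]

lemma momc_vanish {q : Measure (UG d)} [IsFiniteMeasure q]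
    (hinv : ∀ V : UG d, Measure.map (fun U => V * U) q = q)
    (c : Fin d) {p m : Fin d → ℕ} (hpm : p ≠ m) : momc q c p m = 0 := by
  obtain ⟨a₀, ha⟩ : ∃ a₀, p a₀ ≠ m a₀ := by
    by_contra h; push_neg at h; exact hpm (funext h)
  set k : ℤ := (p a₀ : ℤ) - (m a₀ : ℤ) with hk
  have hkz : k ≠ 0 := by omega
  have hk0 : (k : ℝ) ≠ 0 := Int.cast_ne_zero.mpr hkz
  set θ : ℝ := Real.pi / (k : ℝ) with hθ
  set V : UG d := ⟨phaseM a₀ θ, phase_mem a₀ θ⟩ with hV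
  have key : ∀ U : UG d, mintegrand c p m (V * U) = -mintegrand c p m U := by
    intro U
    have hentry : ∀ a : Fin d, ((V * U : UG d) : Matrix (Fin d) (Fin d) ℂ) a c =
        (if a = a₀ then Complex.exp ((θ : ℂ) * Complex.I) else 1) *
          (U : Matrix (Fin d) (Fin d) ℂ) a c := by
      intro a
      show (phaseM a₀ θ * (U : Matrix (Fin d) (Fin d) ℂ)) a c = _
      rw [phaseM, Matrix.diagonal_mul]
    rw [mintegrand, mintegrand]
    simp only [hentry]
    have hsplit : ∀ a : Fin d,
        ((if a = a₀ then Complex.exp ((θ : ℂ) * Complex.I) else 1) *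
          (U : Matrix (Fin d) (Fin d) ℂ) a c) ^ p a *
        (star ((if a = a₀ then Complex.exp ((θ : ℂ) * Complex.I) else 1) *
          (U : Matrix (Fin d) (Fin d) ℂ) a c)) ^ m a =
        ((if a = a₀ then Complex.exp ((θ : ℂ) * Complex.I) else 1) ^ p a *
          (star (if a = a₀ then Complex.exp ((θ : ℂ) * Complex.I) else 1)) ^ m a) *
        (((U : Matrix (Fin d) (Fin d) ℂ) a c) ^ p a *
          (star ((U : Matrix (Fin d) (Fin d) ℂ) a c)) ^ m a) := by
      intro a
      rw [star_mul', mul_pow, mul_pow]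
      ring
    simp only [hsplit]
    rw [Finset.prod_mul_distrib]
    have hphase : (∏ a, ((if a = a₀ then Complex.exp ((θ : ℂ) * Complex.I) else 1) ^ p a *
        (star (if a = a₀ then Complex.exp ((θ : ℂ) * Complex.I) else 1)) ^ m a)) = -1 := by
      rw [Finset.prod_eq_single a₀ (by intro b _ hb; simp [hb]) (by simp)]
      simp only [if_true, eq_self_iff_true]
      rw [star_exp_mul_I, ← Complex.exp_nat_mul, ← Complex.exp_nat_mul, ← Complex.exp_add]
      have harg : (p a₀ : ℂ) * ((θ : ℂ) * Complex.I) + (m a₀ : ℂ) * -((θ : ℂ) * Complex.I) =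
          (Real.pi : ℂ) * Complex.I := by
        have hr : ((p a₀ : ℝ) - (m a₀ : ℝ)) * θ = Real.pi := by
          have h1 : ((p a₀ : ℝ) - (m a₀ : ℝ)) = (k : ℝ) := by push_cast [hk]; ring
          rw [h1, hθ, mul_div_cancel₀ _ hk0]
        calc (p a₀ : ℂ) * ((θ : ℂ) * Complex.I) + (m a₀ : ℂ) * -((θ : ℂ) * Complex.I)
            = (((p a₀ : ℝ) - (m a₀ : ℝ)) * θ : ℝ) * Complex.I := by push_cast; ring
          _ = (Real.pi : ℂ) * Complex.I := by rw [hr]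
      rw [harg, Complex.exp_pi_mul_I]
    rw [hphase]
    ring
  have h1 := integral_comp_mul_left hinv V (cont_mintegrand c p m)
  have h2 : ∫ U, mintegrand c p m (V * U) ∂q = -momc q c p m := by
    simp only [key]
    rw [MeasureTheory.integral_neg]
    rfl
  rw [h2] at h1
  have h3 : ∫ U, mintegrand c p m U ∂q = momc q c p m := rfl
  rw [h3] at h1
  linear_combination (-(1:ℂ)/2) * h1

lemma sum_mul_star_entry (U : UG d) (c : Fin d) :
    ∑ a, ((U : Matrix (Fin d) (Fin d) ℂ) a c) * star ((U : Matrix (Fin d) (Fin d) ℂ) a c) = 1 := by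
  have h := congrFun (congrFun (Matrix.UnitaryGroup.star_mul_self U) c) c
  rw [Matrix.mul_apply] at h
  simp only [Matrix.star_apply, Matrix.one_apply_eq] at h
  rw [← h]
  exact Finset.sum_congr rfl fun a _ => mul_comm _ _

lemma momc_zero {q : Measure (UG d)} [IsProbabilityMeasure q] (c : Fin d) :
    momc q c (fun _ => 0) (fun _ => 0) = 1 := by
  have : ∀ U : UG d, mintegrand c (fun _ => 0) (fun _ => 0) U = 1 := by
    intro U; rw [mintegrand]; simp
  rw [momc]
  simp only [this]
  simp

/-- Increment a multi-index at one coordinate. -/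
def inc (m : Fin d → ℕ) (b : Fin d) : Fin d → ℕ := fun a => m a + if a = b then 1 else 0

lemma momc_sum_inc {q : Measure (UG d)} [IsProbabilityMeasure q] (c : Fin d) (p m : Fin d → ℕ) :
    ∑ b, momc q c (inc p b) (inc m b) = momc q c p m := by
  have hpt : ∀ U : UG d, ∑ b, mintegrand c (inc p b) (inc m b) U = mintegrand c p m U := by
    intro U
    have hone : ∀ b : Fin d, mintegrand c (inc p b) (inc m b) U =
        mintegrand c p m U * (((U : Matrix (Fin d) (Fin d) ℂ) b c) *
          star ((U : Matrix (Fin d) (Fin d) ℂ) b c)) := by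
      intro b
      rw [mintegrand, mintegrand]
      have hrepr : (((U : Matrix (Fin d) (Fin d) ℂ) b c) * star ((U : Matrix (Fin d) (Fin d) ℂ) b c))
          = ∏ a, (((U : Matrix (Fin d) (Fin d) ℂ) a c) ^ (if a = b then 1 else 0) *
            (star ((U : Matrix (Fin d) (Fin d) ℂ) a c)) ^ (if a = b then 1 else 0)) := by
        rw [Finset.prod_eq_single b (by intro a _ hab; simp [hab]) (by simp)]
        simp
      rw [hrepr, ← Finset.prod_mul_distrib]
      apply Finset.prod_congr rfl
      intro a _
      by_cases hab : a = b <;> simp [inc, hab, pow_add] <;> ring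
    calc (∑ b, mintegrand c (inc p b) (inc m b) U)
        = mintegrand c p m U * ∑ b, (((U : Matrix (Fin d) (Fin d) ℂ) b c) *
            star ((U : Matrix (Fin d) (Fin d) ℂ) b c)) := by
          rw [Finset.mul_sum]; exact Finset.sum_congr rfl fun b _ => hone b
      _ = mintegrand c p m U := by rw [sum_mul_star_entry]; ring
  calc (∑ b, momc q c (inc p b) (inc m b))
      = ∫ U, ∑ b, mintegrand c (inc p b) (inc m b) U ∂q :=
        (MeasureTheory.integral_finset_sum _ fun b _ => integrable_mintegrand c _ _).symm
    _ = momc q c p m :=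
        MeasureTheory.integral_congr_ae (Filter.Eventually.of_forall hpt)

lemma tpow_apply {N : ℕ} (A : Matrix (Fin d) (Fin d) ℂ) (x y : Fin N → Fin d) :
    tpow d N A x y = ∏ i, A (x i) (y i) := rfl

lemma tpow_mul {N : ℕ} (A B : Matrix (Fin d) (Fin d) ℂ) :
    tpow d N (A * B) = tpow d N A * tpow d N B := by
  ext x y
  rw [Matrix.mul_apply, tpow_apply]
  simp only [Matrix.mul_apply, tpow_apply]
  calc (∏ i, ∑ zc, A (x i) zc * B zc (y i))
      = ∑ z ∈ Fintype.piFinset (fun _ : Fin N => (Finset.univ : Finset (Fin d))),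
          ∏ i, A (x i) (z i) * B (z i) (y i) := Finset.prod_univ_sum _ _
    _ = ∑ z : Fin N → Fin d, ∏ i, A (x i) (z i) * B (z i) (y i) := by
        rw [Fintype.piFinset_univ]
    _ = ∑ z : Fin N → Fin d, (∏ i, A (x i) (z i)) * ∏ i, B (z i) (y i) :=
        Finset.sum_congr rfl fun z _ => Finset.prod_mul_distrib

lemma tpow_one {N : ℕ} : tpow d N (1 : Matrix (Fin d) (Fin d) ℂ) = 1 := by
  ext x y
  rw [tpow_apply]
  simp only [Matrix.one_apply]
  rw [Finset.prod_boole]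
  by_cases h : x = y
  · simp [h]
  · have h2 : ¬ ∀ i ∈ Finset.univ, x i = y i := by
      intro hc
      exact h (funext fun i => hc i (Finset.mem_univ i))
    rw [if_neg h2, if_neg h]

lemma tpow_conjTranspose {N : ℕ} (A : Matrix (Fin d) (Fin d) ℂ) :
    (tpow d N A)ᴴ = tpow d N Aᴴ := by
  ext x y
  rw [Matrix.conjTranspose_apply, tpow_apply, tpow_apply, star_prod]
  exact Finset.prod_congr rfl fun i _ => rfl

lemma cont_tpowE {N : ℕ} (z w : Fin N → Fin d) :
    Continuous fun U : UG d => tpow d N (U : Matrix (Fin d) (Fin d) ℂ) z w := by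
  simp only [tpow_apply]
  exact continuous_finset_prod _ fun i _ => cont_entry (z i) (w i)

lemma norm_tpowE_le_one {N : ℕ} (z w : Fin N → Fin d) (U : UG d) :
    ‖tpow d N (U : Matrix (Fin d) (Fin d) ℂ) z w‖ ≤ 1 := by
  rw [tpow_apply, norm_prod]
  apply Finset.prod_le_one
  · intro i _; positivity
  · intro i _; exact entry_norm_le_one U (z i) (w i)

/-- The pair integrand appearing in `rhoWord`. -/
def pairI {N : ℕ} (z z' w : Fin N → Fin d) (U : UG d) : ℂ :=
  tpow d N (U : Matrix (Fin d) (Fin d) ℂ) z w *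
    star (tpow d N (U : Matrix (Fin d) (Fin d) ℂ) z' w)

lemma cont_pairI {N : ℕ} (z z' w : Fin N → Fin d) : Continuous (pairI z z' w) :=
  (cont_tpowE z w).mul (cont_tpowE z' w).star

lemma norm_pairI_le_one {N : ℕ} (z z' w : Fin N → Fin d) (U : UG d) : ‖pairI z z' w U‖ ≤ 1 := by
  rw [pairI, norm_mul, norm_star]
  calc ‖tpow d N (U : Matrix (Fin d) (Fin d) ℂ) z w‖ * ‖tpow d N (U : Matrix (Fin d) (Fin d) ℂ) z' w‖
      ≤ 1 * 1 := mul_le_mul (norm_tpowE_le_one z w U) (norm_tpowE_le_one z' w U)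
        (norm_nonneg _) zero_le_one
    _ = 1 := by ring

lemma integrable_pairI {N : ℕ} {q : Measure (UG d)} [IsFiniteMeasure q]
    (z z' w : Fin N → Fin d) : Integrable (pairI z z' w) q :=
  integrable_of_bounded (cont_pairI z z' w) (norm_pairI_le_one z z' w)

lemma rhoWord_apply {N : ℕ} (w : Fin N → Fin d) (q : Measure (UG d)) (x y : Fin N → Fin d) :
    rhoWord d N w q x y = ∫ U, pairI x y w U ∂q := rfl

lemma prod_comp_typ {N : ℕ} {M : Type*} [CommMonoid M] (f : Fin d → M) (x : Fin N → Fin d) :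
    ∏ i, f (x i) = ∏ a, f a ^ typ x a := by
  rw [← Finset.prod_fiberwise_of_maps_to (g := x) (fun i _ => Finset.mem_univ (x i))
    (fun i => f (x i))]
  apply Finset.prod_congr rfl
  intro a _
  rw [typ, ← Finset.prod_const]
  apply Finset.prod_congr rfl
  intro i hi
  rw [(Finset.mem_filter.mp hi).2]

lemma rhoWord_entry {N : ℕ} (c : Fin d) (q : Measure (UG d)) (x y : Fin N → Fin d) :
    rhoWord d N (fun _ => c) q x y = momc q c (typ x) (typ y) := by
  rw [rhoWord_apply, momc]
  apply MeasureTheory.integral_congr_ae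
  apply Filter.Eventually.of_forall
  intro U
  rw [pairI, mintegrand, tpow_apply, tpow_apply, star_prod]
  rw [prod_comp_typ (fun a => (U : Matrix (Fin d) (Fin d) ℂ) a c) x]
  rw [show (∏ i, star ((U : Matrix (Fin d) (Fin d) ℂ) (y i) c))
      = ∏ a, (star ((U : Matrix (Fin d) (Fin d) ℂ) a c)) ^ typ y a from
    prod_comp_typ (fun a => star ((U : Matrix (Fin d) (Fin d) ℂ) a c)) y]
  rw [← Finset.prod_mul_distrib]

lemma twirl {N : ℕ} {q : Measure (UG d)} [IsFiniteMeasure q]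
    (hinv : ∀ V : UG d, Measure.map (fun U => V * U) q = q) (c : Fin d) (V : UG d) :
    rhoWord d N (fun _ => c) q * tpow d N (V : Matrix (Fin d) (Fin d) ℂ)
      = tpow d N (V : Matrix (Fin d) (Fin d) ℂ) * rhoWord d N (fun _ => c) q := by
  set cw : Fin N → Fin d := fun _ => c with hcw
  set S := tpow d N (V : Matrix (Fin d) (Fin d) ℂ) with hS
  set M := rhoWord d N cw q with hM
  have key : S * M * Sᴴ = M := by
    ext x y
    have expand : (S * M * Sᴴ) x y = ∑ z', ∑ z, S x z * M z z' * Sᴴ z' y := by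
      rw [Matrix.mul_apply]
      apply Finset.sum_congr rfl
      intro z' _
      rw [Matrix.mul_apply, Finset.sum_mul]
    have hterm : ∀ z' z : Fin N → Fin d, S x z * M z z' * Sᴴ z' y
        = ∫ U, S x z * pairI z z' cw U * Sᴴ z' y ∂q := by
      intro z' z
      rw [hM, rhoWord_apply]
      rw [show (fun U => S x z * pairI z z' cw U * Sᴴ z' y)
          = fun U => (S x z * Sᴴ z' y) * pairI z z' cw U from funext fun U => by ring]
      rw [MeasureTheory.integral_const_mul]
      ring
    have hint1 : ∀ z z' : Fin N → Fin d,
        Integrable (fun U => S x z * pairI z z' cw U * Sᴴ z' y) q :=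
      fun z z' => ((integrable_pairI z z' cw).const_mul _).mul_const _
    have swap1 : ∀ z' : Fin N → Fin d, (∑ z, ∫ U, S x z * pairI z z' cw U * Sᴴ z' y ∂q)
        = ∫ U, ∑ z, S x z * pairI z z' cw U * Sᴴ z' y ∂q :=
      fun z' => (MeasureTheory.integral_finset_sum _ fun z _ => hint1 z z').symm
    have swap2 : (∑ z' : Fin N → Fin d, ∫ U, ∑ z, S x z * pairI z z' cw U * Sᴴ z' y ∂q)
        = ∫ U, ∑ z', ∑ z, S x z * pairI z z' cw U * Sᴴ z' y ∂q :=
      (MeasureTheory.integral_finset_sum _ fun z' _ =>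
        MeasureTheory.integrable_finset_sum _ fun z _ => hint1 z z').symm
    have hpoint : ∀ U : UG d, (∑ z', ∑ z, S x z * pairI z z' cw U * Sᴴ z' y)
        = pairI x y cw (V * U) := by
      intro U
      have hVU : ((V * U : UG d) : Matrix (Fin d) (Fin d) ℂ)
          = (V : Matrix (Fin d) (Fin d) ℂ) * (U : Matrix (Fin d) (Fin d) ℂ) := rfl
      calc (∑ z', ∑ z, S x z * pairI z z' cw U * Sᴴ z' y)
          = ∑ z, ∑ z', S x z * pairI z z' cw U * Sᴴ z' y := Finset.sum_comm
        _ = (∑ z, S x z * tpow d N (U : Matrix (Fin d) (Fin d) ℂ) z cw) *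
            ∑ z', star (S y z' * tpow d N (U : Matrix (Fin d) (Fin d) ℂ) z' cw) := by
            rw [Finset.sum_mul_sum]
            apply Finset.sum_congr rfl
            intro z _
            apply Finset.sum_congr rfl
            intro z' _
            rw [pairI, star_mul', Matrix.conjTranspose_apply]
            ring
        _ = pairI x y cw (V * U) := by
            rw [pairI, hVU, tpow_mul, Matrix.mul_apply, Matrix.mul_apply, ← star_sum, ← hS]
    rw [expand]
    simp only [hterm]
    simp only [swap1]
    rw [swap2]
    calc (∫ U, ∑ z', ∑ z, S x z * pairI z z' cw U * Sᴴ z' y ∂q)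
        = ∫ U, pairI x y cw (V * U) ∂q :=
          MeasureTheory.integral_congr_ae (Filter.Eventually.of_forall hpoint)
      _ = ∫ U, pairI x y cw U ∂q := integral_comp_mul_left hinv V (cont_pairI x y cw)
      _ = M x y := (rhoWord_apply cw q x y).symm
  have hSconj : Sᴴ * S = 1 := by
    have h1 : (V : Matrix (Fin d) (Fin d) ℂ)ᴴ * (V : Matrix (Fin d) (Fin d) ℂ) = 1 := by
      rw [← Matrix.star_eq_conjTranspose]
      exact Matrix.UnitaryGroup.star_mul_self V
    rw [hS, tpow_conjTranspose, ← tpow_mul, h1, tpow_one]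
  calc M * S = (S * M * Sᴴ) * S := by rw [key]
    _ = S * M * (Sᴴ * S) := by rw [Matrix.mul_assoc]
    _ = S * M := by rw [hSconj, Matrix.mul_one]

/-! #### Rotation matrices and the derivative relation -/

def rotA (a b : Fin d) : Matrix (Fin d) (Fin d) ℂ :=
  Matrix.single a a 1 + Matrix.single b b 1

def rotB (a b : Fin d) : Matrix (Fin d) (Fin d) ℂ :=
  Matrix.single a b 1 - Matrix.single b a 1

def rotM (a b : Fin d) (θ : ℝ) : Matrix (Fin d) (Fin d) ℂ :=
  1 + ((Real.cos θ : ℂ) - 1) • rotA a b + (Real.sin θ : ℂ) • rotB a b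

variable {a b : Fin d}

lemma rotA_mul_rotA (hab : a ≠ b) : rotA a b * rotA a b = rotA a b := by
  rw [rotA, add_mul, mul_add, mul_add]
  rw [Matrix.single_mul_single_same, Matrix.single_mul_single_of_ne _ _ _ _ hab,
    Matrix.single_mul_single_of_ne _ _ _ _ hab.symm, Matrix.single_mul_single_same]
  simp [rotA]

lemma rotA_mul_rotB (hab : a ≠ b) : rotA a b * rotB a b = rotB a b := by
  rw [rotA, rotB, add_mul, mul_sub, mul_sub]
  rw [Matrix.single_mul_single_same, Matrix.single_mul_single_of_ne _ _ _ _ hab,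
    Matrix.single_mul_single_of_ne _ _ _ _ hab.symm, Matrix.single_mul_single_same]
  simp only [mul_zero, zero_mul, mul_one, one_mul, add_zero, zero_add, sub_zero, zero_sub, rotB]
  try abel

lemma rotB_mul_rotA (hab : a ≠ b) : rotB a b * rotA a b = rotB a b := by
  rw [rotA, rotB, sub_mul, mul_add, mul_add]
  rw [Matrix.single_mul_single_same, Matrix.single_mul_single_of_ne _ _ _ _ hab,
    Matrix.single_mul_single_of_ne _ _ _ _ hab.symm, Matrix.single_mul_single_same]
  simp only [mul_zero, zero_mul, mul_one, one_mul, add_zero, zero_add, sub_zero, zero_sub, rotB]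
  try abel

lemma rotB_mul_rotB (hab : a ≠ b) : rotB a b * rotB a b = -rotA a b := by
  rw [rotB, sub_mul, mul_sub, mul_sub]
  rw [Matrix.single_mul_single_same, Matrix.single_mul_single_of_ne _ _ _ _ hab,
    Matrix.single_mul_single_of_ne _ _ _ _ hab.symm, Matrix.single_mul_single_same]
  simp [rotA]
  abel

lemma conjT_rotA : star (rotA a b) = rotA a b := by
  ext p r
  simp only [Matrix.star_eq_conjTranspose, Matrix.conjTranspose_apply, rotA, Matrix.add_apply,
    Matrix.single, Matrix.of_apply, star_add]
  rw [apply_ite (star : ℂ → ℂ), apply_ite (star : ℂ → ℂ), star_one, star_zero]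
  simp [and_comm]

lemma conjT_rotB : star (rotB a b) = -rotB a b := by
  ext p r
  simp only [Matrix.star_eq_conjTranspose, Matrix.conjTranspose_apply, rotB, Matrix.sub_apply,
    Matrix.single, Matrix.of_apply, star_sub, Matrix.neg_apply, neg_sub]
  rw [apply_ite (star : ℂ → ℂ), apply_ite (star : ℂ → ℂ), star_one, star_zero]
  simp [and_comm]

lemma rot_mem (hab : a ≠ b) (θ : ℝ) : rotM a b θ ∈ Matrix.unitaryGroup (Fin d) ℂ := by
  rw [Matrix.mem_unitaryGroup_iff]
  set u : ℂ := (Real.cos θ : ℂ) - 1 with hu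
  set s : ℂ := (Real.sin θ : ℂ) with hs
  have hstar : star (rotM a b θ) = 1 + u • rotA a b - s • rotB a b := by
    rw [rotM]
    rw [star_add, star_add, star_smul, star_smul, star_one, conjT_rotA, conjT_rotB]
    have hsu : star u = u := by
      rw [hu]
      simp only [Complex.star_def, map_sub, _root_.map_one, Complex.conj_ofReal]
    have hss : star s = s := by
      rw [hs]
      simp only [Complex.star_def, Complex.conj_ofReal]
    rw [hsu, hss, smul_neg]
    abel
  rw [hstar, rotM]
  have e1 : (1 + u • rotA a b + s • rotB a b) * (1 + u • rotA a b - s • rotB a b)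
      = 1 + (u * u + u + u + s * s) • rotA a b := by
    simp only [mul_add, add_mul, mul_sub, sub_mul, Matrix.smul_mul, Matrix.mul_smul, one_mul,
      mul_one, rotA_mul_rotA hab, rotA_mul_rotB hab, rotB_mul_rotA hab, rotB_mul_rotB hab,
      smul_smul, smul_neg, smul_add, smul_sub]
    module
  rw [e1]
  have hpyth : (Real.cos θ : ℂ) ^ 2 + (Real.sin θ : ℂ) ^ 2 = 1 := by
    exact_mod_cast congrArg (fun t : ℝ => (t : ℂ)) (Real.cos_sq_add_sin_sq θ)
  have hcoef : u * u + u + u + s * s = 0 := by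
    rw [hu, hs]
    linear_combination hpyth
  rw [hcoef, zero_smul, add_zero]

lemma rotM_zero : rotM a b 0 = 1 := by
  rw [rotM]
  simp

lemma hasDerivAt_rotM_entry (p r : Fin d) :
    HasDerivAt (fun θ => rotM a b θ p r) (rotB a b p r) 0 := by
  have hc : HasDerivAt (fun θ : ℝ => ((Real.cos θ : ℂ))) (((-Real.sin 0 : ℝ) : ℂ)) 0 :=
    (Real.hasDerivAt_cos 0).ofReal_comp
  have hsin : HasDerivAt (fun θ : ℝ => ((Real.sin θ : ℂ))) (((Real.cos 0 : ℝ) : ℂ)) 0 :=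
    (Real.hasDerivAt_sin 0).ofReal_comp
  have hfun : (fun θ => rotM a b θ p r) = fun θ =>
      (1 : Matrix (Fin d) (Fin d) ℂ) p r + ((Real.cos θ : ℂ) - 1) * rotA a b p r
        + (Real.sin θ : ℂ) * rotB a b p r := by
    funext θ
    rw [rotM]
    simp [Matrix.add_apply, Matrix.smul_apply, smul_eq_mul]
  rw [hfun]
  have h := ((hasDerivAt_const (0 : ℝ) ((1 : Matrix (Fin d) (Fin d) ℂ) p r)).fun_add
    ((hc.sub_const 1).mul_const (rotA a b p r))).fun_add (hsin.mul_const (rotB a b p r))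
  refine h.congr_deriv ?_
  simp

lemma hasDerivAt_tpow_rot {N : ℕ} (z y : Fin N → Fin d) :
    HasDerivAt (fun θ => tpow d N (rotM a b θ) z y)
      (∑ i, (∏ j ∈ Finset.univ.erase i, (1 : Matrix (Fin d) (Fin d) ℂ) (z j) (y j)) •
        rotB a b (z i) (y i)) 0 := by
  have h := HasDerivAt.fun_finsetProd (u := Finset.univ)
    (f := fun (i : Fin N) (θ : ℝ) => rotM a b θ (z i) (y i))
    (f' := fun i => rotB a b (z i) (y i))
    (fun i _ => hasDerivAt_rotM_entry (z i) (y i))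
  simpa only [tpow_apply, rotM_zero] using h

lemma indicator_prod {N : ℕ} (i : Fin N) (z y : Fin N → Fin d) :
    (∏ j ∈ Finset.univ.erase i, (1 : Matrix (Fin d) (Fin d) ℂ) (z j) (y j))
      = if ∀ j, j ≠ i → z j = y j then 1 else 0 := by
  simp only [Matrix.one_apply]
  rw [Finset.prod_boole]
  by_cases h : ∀ j, j ≠ i → z j = y j
  · rw [if_pos (fun j hj => h j (Finset.mem_erase.mp hj).1), if_pos h]
  · rw [if_neg (fun hc => h fun j hj => hc j (Finset.mem_erase.mpr ⟨hj, Finset.mem_univ j⟩)),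
      if_neg h]

lemma filter_eq_image_update {N : ℕ} (i : Fin N) (y : Fin N → Fin d) :
    Finset.univ.filter (fun z : Fin N → Fin d => ∀ j, j ≠ i → z j = y j)
      = Finset.image (fun v => Function.update y i v) Finset.univ := by
  ext z
  simp only [Finset.mem_filter, Finset.mem_univ, true_and, Finset.mem_image]
  constructor
  · intro h
    refine ⟨z i, ?_⟩
    funext j
    by_cases hj : j = i
    · subst hj; rw [Function.update_self]
    · rw [Function.update_of_ne hj, h j hj]
  · rintro ⟨v, rfl⟩ j hj
    rw [Function.update_of_ne hj]

lemma update_inj {N : ℕ} (i : Fin N) (y : Fin N → Fin d) {v w : Fin d}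
    (h : Function.update y i v = Function.update y i w) : v = w := by
  have := congrFun h i
  simpa [Function.update_self] using this

lemma rotB_apply' (p r : Fin d) : rotB a b p r =
    (if a = p ∧ b = r then 1 else 0) - (if b = p ∧ a = r then 1 else 0) := by
  simp [rotB, Matrix.sub_apply, Matrix.single, Matrix.of_apply]

lemma sum_words_right {N : ℕ} (f : (Fin N → Fin d) → ℂ) (y : Fin N → Fin d) (i : Fin N) :
    (∑ z : Fin N → Fin d, f z *
        ((∏ j ∈ Finset.univ.erase i, (1 : Matrix (Fin d) (Fin d) ℂ) (z j) (y j)) •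
          rotB a b (z i) (y i)))
      = (if b = y i then f (Function.update y i a) else 0)
        - (if a = y i then f (Function.update y i b) else 0) := by
  simp only [indicator_prod, smul_eq_mul]
  have hstep : ∀ z : Fin N → Fin d,
      f z * ((if ∀ j, j ≠ i → z j = y j then (1:ℂ) else 0) * rotB a b (z i) (y i))
        = if ∀ j, j ≠ i → z j = y j then f z * rotB a b (z i) (y i) else 0 := by
    intro z
    by_cases h : ∀ j, j ≠ i → z j = y j <;> simp [h]
  simp only [hstep]
  rw [← Finset.sum_filter, filter_eq_image_update,
    Finset.sum_image (fun v _ w _ h => update_inj i y h)]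
  have hval : ∀ v : Fin d, f (Function.update y i v) * rotB a b ((Function.update y i v) i) (y i)
      = f (Function.update y i v) *
        ((if a = v ∧ b = y i then 1 else 0) - (if b = v ∧ a = y i then 1 else 0)) := by
    intro v
    rw [Function.update_self, rotB_apply']
  simp only [hval, mul_sub]
  rw [Finset.sum_sub_distrib]
  congr 1
  · simp only [ite_and]
    rw [show (∑ v : Fin d, f (Function.update y i v) * if a = v then if b = y i then (1:ℂ) else 0 else 0)
        = ∑ v : Fin d, if a = v then (if b = y i then f (Function.update y i v) else 0) else 0 from
      Finset.sum_congr rfl fun v _ => by by_cases h1 : a = v <;> by_cases h2 : b = y i <;> simp [h1, h2]]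
    rw [Finset.sum_ite_eq]
    simp
  · simp only [ite_and]
    rw [show (∑ v : Fin d, f (Function.update y i v) * if b = v then if a = y i then (1:ℂ) else 0 else 0)
        = ∑ v : Fin d, if b = v then (if a = y i then f (Function.update y i v) else 0) else 0 from
      Finset.sum_congr rfl fun v _ => by by_cases h1 : b = v <;> by_cases h2 : a = y i <;> simp [h1, h2]]
    rw [Finset.sum_ite_eq]
    simp

lemma indicator_prod_left {N : ℕ} (i : Fin N) (x z : Fin N → Fin d) :
    (∏ j ∈ Finset.univ.erase i, (1 : Matrix (Fin d) (Fin d) ℂ) (x j) (z j))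
      = if ∀ j, j ≠ i → z j = x j then 1 else 0 := by
  simp only [Matrix.one_apply]
  rw [Finset.prod_boole]
  by_cases h : ∀ j, j ≠ i → z j = x j
  · rw [if_pos (fun j hj => (h j (Finset.mem_erase.mp hj).1).symm), if_pos h]
  · rw [if_neg (fun hc => h fun j hj => (hc j (Finset.mem_erase.mpr ⟨hj, Finset.mem_univ j⟩)).symm),
      if_neg h]

lemma sum_words_left {N : ℕ} (f : (Fin N → Fin d) → ℂ) (x : Fin N → Fin d) (i : Fin N) :
    (∑ z : Fin N → Fin d,
        ((∏ j ∈ Finset.univ.erase i, (1 : Matrix (Fin d) (Fin d) ℂ) (x j) (z j)) •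
          rotB a b (x i) (z i)) * f z)
      = (if a = x i then f (Function.update x i b) else 0)
        - (if b = x i then f (Function.update x i a) else 0) := by
  simp only [indicator_prod_left, smul_eq_mul]
  have hstep : ∀ z : Fin N → Fin d,
      ((if ∀ j, j ≠ i → z j = x j then (1:ℂ) else 0) * rotB a b (x i) (z i)) * f z
        = if ∀ j, j ≠ i → z j = x j then rotB a b (x i) (z i) * f z else 0 := by
    intro z
    by_cases h : ∀ j, j ≠ i → z j = x j <;> simp [h]
  simp only [hstep]
  rw [← Finset.sum_filter, filter_eq_image_update,
    Finset.sum_image (fun v _ w _ h => update_inj i x h)]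
  have hval : ∀ v : Fin d, rotB a b (x i) ((Function.update x i v) i) * f (Function.update x i v)
      = ((if a = x i ∧ b = v then 1 else 0) - (if b = x i ∧ a = v then 1 else 0)) *
        f (Function.update x i v) := by
    intro v
    rw [Function.update_self, rotB_apply']
  simp only [hval, sub_mul]
  rw [Finset.sum_sub_distrib]
  congr 1
  · simp only [ite_and]
    rw [show (∑ v : Fin d, (if a = x i then if b = v then (1:ℂ) else 0 else 0) * f (Function.update x i v))
        = ∑ v : Fin d, if b = v then (if a = x i then f (Function.update x i v) else 0) else 0 from
      Finset.sum_congr rfl fun v _ => by by_cases h1 : a = x i <;> by_cases h2 : b = v <;> simp [h1, h2]]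
    rw [Finset.sum_ite_eq]
    simp
  · simp only [ite_and]
    rw [show (∑ v : Fin d, (if b = x i then if a = v then (1:ℂ) else 0 else 0) * f (Function.update x i v))
        = ∑ v : Fin d, if a = v then (if b = x i then f (Function.update x i v) else 0) else 0 from
      Finset.sum_congr rfl fun v _ => by by_cases h1 : b = x i <;> by_cases h2 : a = v <;> simp [h1, h2]]
    rw [Finset.sum_ite_eq]
    simp

lemma star_relation {N : ℕ} {q : Measure (UG d)} [IsFiniteMeasure q]
    (hinv : ∀ V : UG d, Measure.map (fun U => V * U) q = q) (c : Fin d)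
    (hab : a ≠ b) (x y : Fin N → Fin d) :
    (∑ i, ((if b = y i then momc q c (typ x) (typ (Function.update y i a)) else 0)
      - (if a = y i then momc q c (typ x) (typ (Function.update y i b)) else 0)))
    = ∑ i, ((if a = x i then momc q c (typ (Function.update x i b)) (typ y) else 0)
      - (if b = x i then momc q c (typ (Function.update x i a)) (typ y) else 0)) := by
  set M := rhoWord d N (fun _ => c) q with hM
  set D : (Fin N → Fin d) → (Fin N → Fin d) → ℂ := fun z w =>
    ∑ i, (∏ j ∈ Finset.univ.erase i, (1 : Matrix (Fin d) (Fin d) ℂ) (z j) (w j)) •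
      rotB a b (z i) (w i) with hD
  have hg : ∀ θ : ℝ, (∑ z, M x z * tpow d N (rotM a b θ) z y)
      = ∑ z, tpow d N (rotM a b θ) x z * M z y := by
    intro θ
    have h1 := twirl (N := N) hinv c ⟨rotM a b θ, rot_mem hab θ⟩
    have h2 := congrFun (congrFun h1 x) y
    rw [Matrix.mul_apply, Matrix.mul_apply] at h2
    exact h2
  have hder1 : HasDerivAt (fun θ => ∑ z, M x z * tpow d N (rotM a b θ) z y)
      (∑ z, M x z * D z y) 0 := by
    apply HasDerivAt.fun_sum
    intro z _
    exact (hasDerivAt_tpow_rot z y).const_mul (M x z)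
  have hder2 : HasDerivAt (fun θ => ∑ z, tpow d N (rotM a b θ) x z * M z y)
      (∑ z, D x z * M z y) 0 := by
    apply HasDerivAt.fun_sum
    intro z _
    exact (hasDerivAt_tpow_rot x z).mul_const (M z y)
  have hzero : HasDerivAt (fun θ => ∑ z, M x z * tpow d N (rotM a b θ) z y)
      (∑ z, D x z * M z y) 0 := by
    have hfun : (fun θ => ∑ z, M x z * tpow d N (rotM a b θ) z y)
        = fun θ => ∑ z, tpow d N (rotM a b θ) x z * M z y := funext hg
    rw [hfun]
    exact hder2
  have heq : (∑ z, M x z * D z y) = ∑ z, D x z * M z y := hder1.unique hzero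
  have hL : (∑ z, M x z * D z y)
      = ∑ i, ((if b = y i then momc q c (typ x) (typ (Function.update y i a)) else 0)
        - (if a = y i then momc q c (typ x) (typ (Function.update y i b)) else 0)) := by
    simp only [hD, Finset.mul_sum]
    rw [Finset.sum_comm]
    apply Finset.sum_congr rfl
    intro i _
    rw [sum_words_right (fun z => M x z) y i]
    simp only [hM, rhoWord_entry]
  have hR : (∑ z, D x z * M z y)
      = ∑ i, ((if a = x i then momc q c (typ (Function.update x i b)) (typ y) else 0)
        - (if b = x i then momc q c (typ (Function.update x i a)) (typ y) else 0)) := by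
    simp only [hD, Finset.sum_mul]
    rw [Finset.sum_comm]
    apply Finset.sum_congr rfl
    intro i _
    rw [sum_words_left (fun z => M z y) x i]
    simp only [hM, rhoWord_entry]
  rw [← hL, ← hR]
  exact heq

/-! #### Types, words, and the moment recursion -/

lemma sum_typ {N : ℕ} (x : Fin N → Fin d) : ∑ a, typ x a = N := by
  simp only [typ, Finset.card_filter]
  rw [Finset.sum_comm]
  have h1 : ∀ i : Fin N, (∑ a, if x i = a then (1:ℕ) else 0) = 1 := by
    intro i
    rw [Finset.sum_ite_eq]
    simp
  simp only [h1]
  simp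

lemma typ_update_add {N : ℕ} (x : Fin N → Fin d) (j : Fin N) (v : Fin d) (r : Fin d) :
    typ (Function.update x j v) r + (if x j = r then 1 else 0)
      = typ x r + (if v = r then 1 else 0) := by
  simp only [typ, Finset.card_filter]
  rw [← Finset.add_sum_erase _ _ (Finset.mem_univ j), ← Finset.add_sum_erase _ _ (Finset.mem_univ j)]
  rw [Function.update_self]
  have hcongr : (∑ i ∈ Finset.univ.erase j, if Function.update x j v i = r then (1:ℕ) else 0)
      = ∑ i ∈ Finset.univ.erase j, if x i = r then (1:ℕ) else 0 :=
    Finset.sum_congr rfl (fun i hi => by rw [Function.update_of_ne (Finset.mem_erase.mp hi).1])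
  rw [hcongr]
  ring

lemma pos_typ_of_mem {N : ℕ} {x : Fin N → Fin d} {a : Fin d} {i : Fin N} (h : x i = a) :
    0 < typ x a := by
  rw [typ]
  apply Finset.card_pos.mpr
  exact ⟨i, Finset.mem_filter.mpr ⟨Finset.mem_univ i, h⟩⟩

lemma exists_index {N : ℕ} (x : Fin N → Fin d) (a : Fin d) (h : 0 < typ x a) :
    ∃ j, x j = a := by
  rw [typ] at h
  obtain ⟨j, hj⟩ := Finset.card_pos.mp h
  exact ⟨j, (Finset.mem_filter.mp hj).2⟩

lemma count_get (l : List (Fin d)) (a : Fin d) :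
    (Finset.univ.filter fun i : Fin l.length => l.get i = a).card = l.count a := by
  induction l with
  | nil => simp
  | cons hd tl ih =>
    have ih' : (∑ i : Fin tl.length, if tl.get i = a then (1:ℕ) else 0) = tl.count a := by
      rw [← Finset.card_filter]
      exact ih
    rw [Finset.card_filter]
    show (∑ i : Fin (tl.length + 1), if (hd :: tl).get i = a then (1:ℕ) else 0) = _
    rw [Fin.sum_univ_succ]
    simp only [List.get_cons_zero]
    have hsucc : (∑ i : Fin tl.length, if (hd :: tl).get i.succ = a then (1:ℕ) else 0)
        = ∑ i : Fin tl.length, if tl.get i = a then (1:ℕ) else 0 := rfl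
    rw [hsucc, ih', List.count_cons]
    by_cases h : hd = a <;> simp [h] <;> omega

lemma count_wordList (t : Fin d → ℕ) (a : Fin d) : (wordList d t).count a = t a := by
  rw [wordList, List.count_flatten, List.map_ofFn]
  rw [List.sum_ofFn]
  have h1 : ∀ i : Fin d, (List.count a ∘ fun i => List.replicate (t i) i) i
      = if i = a then t i else 0 := by
    intro i
    simp only [Function.comp_apply, List.count_replicate]
    by_cases h : i = a <;> simp [h]
  simp only [h1]
  rw [Finset.sum_ite_eq' Finset.univ a (fun i => t i)]
  simp

lemma typ_word {N : ℕ} (t : Fin d → ℕ) (hsum : ∑ i, t i = N) (a : Fin d) :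
    typ (word d N t hsum) a = t a := by
  have hlen : (wordList d t).length = N := by rw [wordList_length, hsum]
  rw [typ, ← count_wordList t a, ← count_get (wordList d t) a]
  apply Finset.card_bij' (fun (i : Fin N) _ => Fin.cast hlen.symm i)
    (fun (i' : Fin (wordList d t).length) _ => Fin.cast hlen i')
  · intro i hi
    simp only [Finset.mem_filter, Finset.mem_univ, true_and] at hi ⊢
    exact hi
  · intro i' hi'
    simp only [Finset.mem_filter, Finset.mem_univ, true_and] at hi' ⊢
    exact hi'
  · intro i _
    rfl
  · intro i' _
    rfl

/-- Move one unit of the multi-index from `a` to `b`. -/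
def tmove (a b : Fin d) (t : Fin d → ℕ) : Fin d → ℕ :=
  Function.update (Function.update t a (t a - 1)) b (t b + 1)

lemma tmove_apply {a b : Fin d} (hab : a ≠ b) (t : Fin d → ℕ) (r : Fin d) :
    tmove a b t r = if r = b then t b + 1 else if r = a then t a - 1 else t r := by
  rw [tmove]
  by_cases h1 : r = b
  · subst h1; rw [Function.update_self]; simp
  · rw [Function.update_of_ne h1]
    by_cases h2 : r = a
    · subst h2; rw [Function.update_self]; simp [h1]
    · rw [Function.update_of_ne h2]; simp [h1, h2]

lemma sum_ite_count {N : ℕ} (x : Fin N → Fin d) (a : Fin d) (K : ℂ) :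
    (∑ i, if a = x i then K else 0) = (typ x a : ℂ) * K := by
  have h1 : (∑ i : Fin N, if x i = a then (1:ℂ) else 0) = ((typ x a : ℕ) : ℂ) := by
    rw [typ, Finset.card_filter, Nat.cast_sum]
    apply Finset.sum_congr rfl
    intro i _
    by_cases h : x i = a <;> simp [h]
  calc (∑ i, if a = x i then K else 0)
      = ∑ i : Fin N, (if x i = a then (1:ℂ) else 0) * K := by
        apply Finset.sum_congr rfl
        intro i _
        by_cases h : a = x i
        · rw [if_pos h, if_pos h.symm, one_mul]
        · rw [if_neg h, if_neg fun hh => h hh.symm, zero_mul]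
    _ = (typ x a : ℂ) * K := by rw [← Finset.sum_mul, h1]

lemma relationH {q : Measure (UG d)} [IsProbabilityMeasure q]
    (hinv : ∀ V : UG d, Measure.map (fun U => V * U) q = q) (c : Fin d)
    {a b : Fin d} (hab : a ≠ b) (t : Fin d → ℕ) (hta : 1 ≤ t a) :
    ((t b : ℂ) + 1) * momc q c t t
      = (t a : ℂ) * momc q c (tmove a b t) (tmove a b t) := by
  set N := ∑ i, t i with hN
  have hsum : ∑ i, t i = N := rfl
  set x := word d N t hsum with hx
  have htx : ∀ r, typ x r = t r := typ_word t hsum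
  obtain ⟨j, hj⟩ : ∃ j, x j = a := exists_index x a (by rw [htx]; omega)
  set y := Function.update x j b with hy
  have hty : ∀ r, typ y r = tmove a b t r := by
    intro r
    rw [hy]
    have h1 := typ_update_add x j b r
    rw [hj, htx r] at h1
    rw [tmove_apply hab]
    by_cases h2 : r = b
    · subst h2
      simp [hab, Ne.symm hab] at h1 ⊢
      omega
    · by_cases h3 : r = a
      · subst h3
        simp [hab, Ne.symm hab, h2, Ne.symm h2] at h1 ⊢
        omega
      · simp [h2, h3, Ne.symm h2, Ne.symm h3] at h1 ⊢
        omega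
  have hrel := star_relation (a := a) (b := b) hinv c hab x y
  rw [Finset.sum_sub_distrib, Finset.sum_sub_distrib] at hrel
  have hS1 : (∑ i, if b = y i then momc q c (typ x) (typ (Function.update y i a)) else 0)
      = ((t b : ℂ) + 1) * momc q c t t := by
    have hterm : ∀ i, (if b = y i then momc q c (typ x) (typ (Function.update y i a)) else 0)
        = (if b = y i then momc q c t t else 0) := by
      intro i
      by_cases h : b = y i
      · rw [if_pos h, if_pos h]
        congr 1
        · exact funext htx
        · funext r
          have h1 := typ_update_add y i a r
          rw [← h, hty r, tmove_apply hab] at h1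
          by_cases h2 : r = b
          · subst h2
            simp [hab, Ne.symm hab] at h1
            omega
          · by_cases h3 : r = a
            · subst h3
              simp [hab, Ne.symm hab, h2, Ne.symm h2] at h1
              omega
            · simp [h2, h3, Ne.symm h2, Ne.symm h3] at h1
              omega
      · rw [if_neg h, if_neg h]
    simp only [hterm]
    rw [sum_ite_count y b (momc q c t t)]
    have : typ y b = t b + 1 := by
      rw [hty b, tmove_apply hab, if_pos rfl]
    rw [this]
    push_cast
    ring
  have hS2 : (∑ i, if a = y i then momc q c (typ x) (typ (Function.update y i b)) else 0) = 0 := by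
    apply Finset.sum_eq_zero
    intro i _
    by_cases h : a = y i
    · rw [if_pos h]
      apply momc_vanish hinv c
      intro heq
      have hr := congrFun heq a
      have h1 := typ_update_add y i b a
      rw [← h] at h1
      have hya : 0 < typ y a := pos_typ_of_mem h.symm
      have h2 : typ y a = t a - 1 := by
        rw [hty a, tmove_apply hab, if_neg hab, if_pos rfl]
      simp [Ne.symm hab] at h1
      rw [htx a] at hr
      omega
    · rw [if_neg h]
  have hS3 : (∑ i, if a = x i then momc q c (typ (Function.update x i b)) (typ y) else 0)
      = (t a : ℂ) * momc q c (tmove a b t) (tmove a b t) := by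
    have hterm : ∀ i, (if a = x i then momc q c (typ (Function.update x i b)) (typ y) else 0)
        = (if a = x i then momc q c (tmove a b t) (tmove a b t) else 0) := by
      intro i
      by_cases h : a = x i
      · rw [if_pos h, if_pos h]
        congr 1
        · funext r
          have h1 := typ_update_add x i b r
          rw [← h, htx r] at h1
          rw [tmove_apply hab]
          by_cases h2 : r = b
          · subst h2
            simp [hab, Ne.symm hab] at h1 ⊢
            omega
          · by_cases h3 : r = a
            · subst h3
              simp [hab, Ne.symm hab, h2, Ne.symm h2] at h1 ⊢
              omega
            · simp [h2, h3, Ne.symm h2, Ne.symm h3] at h1 ⊢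
              omega
        · exact funext hty
      · rw [if_neg h, if_neg h]
    simp only [hterm]
    rw [sum_ite_count x a (momc q c (tmove a b t) (tmove a b t))]
    rw [show typ x a = t a from htx a]
  have hS4 : (∑ i, if b = x i then momc q c (typ (Function.update x i a)) (typ y) else 0) = 0 := by
    apply Finset.sum_eq_zero
    intro i _
    by_cases h : b = x i
    · rw [if_pos h]
      apply momc_vanish hinv c
      intro heq
      have hr := congrFun heq a
      have h1 := typ_update_add x i a a
      rw [← h] at h1
      have h2 : typ y a = t a - 1 := by
        rw [hty a, tmove_apply hab, if_neg hab, if_pos rfl]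
      simp [Ne.symm hab] at h1
      rw [htx a] at h1
      rw [h2] at hr
      omega
    · rw [if_neg h]
  rw [hS1, hS2, hS3, hS4] at hrel
  simpa using hrel

/-- The concentrated multi-index `(N, 0, …, 0)`. -/
def nu (hd : 0 < d) (N : ℕ) : Fin d → ℕ := fun r => if r = ⟨0, hd⟩ then N else 0

lemma sum_nu (hd : 0 < d) (N : ℕ) : ∑ r, nu hd N r = N := by
  simp only [nu]
  rw [Finset.sum_ite_eq' Finset.univ (⟨0, hd⟩ : Fin d) (fun _ => N)]
  simp

lemma prod_factorial_nu (hd : 0 < d) (N : ℕ) : ∏ r, (nu hd N r).factorial = N.factorial := by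
  have h : ∀ r : Fin d, (nu hd N r).factorial = if r = ⟨0, hd⟩ then N.factorial else 1 := by
    intro r
    rw [nu]
    by_cases hr : r = ⟨0, hd⟩ <;> simp [hr]
  simp only [h]
  rw [Finset.prod_ite_eq' Finset.univ (⟨0, hd⟩ : Fin d) (fun _ => N.factorial)]
  simp

lemma sum_inc (m : Fin d → ℕ) (b : Fin d) : ∑ r, inc m b r = (∑ r, m r) + 1 := by
  simp only [inc]
  rw [Finset.sum_add_distrib]
  rw [Finset.sum_ite_eq' Finset.univ b (fun _ => 1)]
  simp

lemma sum_tmove {a b : Fin d} (hab : a ≠ b) (t : Fin d → ℕ) (hta : 1 ≤ t a) :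
    ∑ r, tmove a b t r = ∑ r, t r := by
  have e1 : ∀ f : Fin d → ℕ, ∑ r, f r = f b + (f a + ∑ r ∈ (Finset.univ.erase b).erase a, f r) := by
    intro f
    rw [← Finset.add_sum_erase _ f (Finset.mem_univ b)]
    congr 1
    rw [← Finset.add_sum_erase _ f (Finset.mem_erase.mpr ⟨hab, Finset.mem_univ a⟩)]
  have h2 : ∀ r ∈ (Finset.univ.erase b).erase a, tmove a b t r = t r := by
    intro r hr
    obtain ⟨hra, hrb'⟩ := Finset.mem_erase.mp hr
    obtain ⟨hrb, _⟩ := Finset.mem_erase.mp hrb'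
    rw [tmove_apply hab, if_neg hrb, if_neg hra]
  have e3 : (∑ r ∈ (Finset.univ.erase b).erase a, tmove a b t r)
      = ∑ r ∈ (Finset.univ.erase b).erase a, t r := Finset.sum_congr rfl h2
  have hb : tmove a b t b = t b + 1 := by rw [tmove_apply hab, if_pos rfl]
  have ha : tmove a b t a = t a - 1 := by rw [tmove_apply hab, if_neg hab, if_pos rfl]
  rw [e1 (tmove a b t), e1 t, e3, hb, ha]
  omega

lemma step1 {q : Measure (UG d)} [IsProbabilityMeasure q]
    (hinv : ∀ V : UG d, Measure.map (fun U => V * U) q = q) (c : Fin d) (hd : 0 < d) :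
    ∀ (K : ℕ) (m : Fin d → ℕ), (∑ r, m r) - m ⟨0, hd⟩ ≤ K →
      (((∑ r, m r).factorial : ℕ) : ℂ) * momc q c m m
        = ((∏ r, (m r).factorial : ℕ) : ℂ) *
            momc q c (nu hd (∑ r, m r)) (nu hd (∑ r, m r)) := by
  intro K
  induction K with
  | zero =>
    intro m hm
    have hsplit := Finset.add_sum_erase Finset.univ m (Finset.mem_univ (⟨0, hd⟩ : Fin d))
    have ha0 : m ⟨0, hd⟩ ≤ ∑ r, m r :=
      Finset.single_le_sum (f := m) (fun r _ => Nat.zero_le _) (Finset.mem_univ _)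
    have hz : ∀ r ∈ Finset.univ.erase (⟨0, hd⟩ : Fin d), m r = 0 := by
      intro r hr
      have hle := Finset.single_le_sum (f := m) (fun r _ => Nat.zero_le _) hr
      omega
    have hzz : ∑ r ∈ Finset.univ.erase (⟨0, hd⟩ : Fin d), m r = 0 := Finset.sum_eq_zero hz
    have hmnu : m = nu hd (∑ r, m r) := by
      funext r
      by_cases h : r = ⟨0, hd⟩
      · subst h
        rw [show nu hd (∑ r, m r) ⟨0, hd⟩ = ∑ r, m r from by simp [nu]]
        omega
      · rw [show nu hd (∑ r, m r) r = 0 from by simp [nu, h]]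
        exact hz r (Finset.mem_erase.mpr ⟨h, Finset.mem_univ r⟩)
    have hprod : (∏ r, (m r).factorial) = (∑ r, m r).factorial := by
      rw [← Finset.mul_prod_erase _ (fun r => (m r).factorial)
        (Finset.mem_univ (⟨0, hd⟩ : Fin d))]
      rw [Finset.prod_eq_one (fun r hr => by rw [hz r hr]; rfl)]
      rw [mul_one]
      congr 1
      omega
    have hmom : momc q c m m = momc q c (nu hd (∑ r, m r)) (nu hd (∑ r, m r)) := by
      rw [← hmnu]
    rw [hprod, hmom]
  | succ K ih =>
    intro m hm
    by_cases hK : (∑ r, m r) - m ⟨0, hd⟩ ≤ K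
    · exact ih m hK
    · set a₀ : Fin d := ⟨0, hd⟩ with ha₀
      obtain ⟨b, hb, hbne⟩ : ∃ b ∈ Finset.univ.erase a₀, m b ≠ 0 := by
        by_contra hcon
        push_neg at hcon
        have h0 : ∑ r ∈ Finset.univ.erase a₀, m r = 0 := Finset.sum_eq_zero hcon
        have hsplit := Finset.add_sum_erase Finset.univ m (Finset.mem_univ a₀)
        omega
      have hbne' : b ≠ a₀ := (Finset.mem_erase.mp hb).1
      have hmb : 1 ≤ m b := Nat.one_le_iff_ne_zero.mpr hbne
      set m' := tmove b a₀ m with hm'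
      have hsum' : ∑ r, m' r = ∑ r, m r := sum_tmove hbne' m hmb
      have hm'a : m' a₀ = m a₀ + 1 := by rw [hm', tmove_apply hbne', if_pos rfl]
      have hm'b : m' b = m b - 1 := by rw [hm', tmove_apply hbne', if_neg hbne', if_pos rfl]
      have hrel := relationH hinv c hbne' m hmb
      have ih' := ih m' (by rw [hsum', hm'a]; omega)
      have hfacnat : m b * ∏ r, (m' r).factorial = (m a₀ + 1) * ∏ r, (m r).factorial := by
        have e1 : ∀ f : Fin d → ℕ, ∏ r, f r
            = f a₀ * (f b * ∏ r ∈ (Finset.univ.erase a₀).erase b, f r) := by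
          intro f
          rw [← Finset.mul_prod_erase _ f (Finset.mem_univ a₀)]
          congr 1
          rw [← Finset.mul_prod_erase _ f (Finset.mem_erase.mpr ⟨hbne', Finset.mem_univ b⟩)]
        rw [e1 (fun r => (m' r).factorial), e1 (fun r => (m r).factorial)]
        have h2 : ∀ r ∈ (Finset.univ.erase a₀).erase b, (m' r).factorial = (m r).factorial := by
          intro r hr
          obtain ⟨hrb, hr'⟩ := Finset.mem_erase.mp hr
          obtain ⟨hra, _⟩ := Finset.mem_erase.mp hr'
          rw [hm', tmove_apply hbne', if_neg hra, if_neg hrb]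
        rw [Finset.prod_congr rfl h2, hm'a, hm'b]
        have h3 : (m b).factorial = m b * (m b - 1).factorial := by
          conv_lhs => rw [show m b = (m b - 1) + 1 from by omega]
          rw [Nat.factorial_succ, show (m b - 1) + 1 = m b from by omega]
        rw [Nat.factorial_succ, h3]
        ring
      have hcancel : ((m a₀ : ℂ) + 1) ≠ 0 := by
        have h := (Nat.cast_ne_zero (R := ℂ)).mpr (Nat.succ_ne_zero (m a₀))
        push_cast at h
        exact h
      apply mul_left_cancel₀ hcancel
      calc ((m a₀ : ℂ) + 1) * ((((∑ r, m r).factorial : ℕ) : ℂ) * momc q c m m)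
          = (((∑ r, m r).factorial : ℕ) : ℂ) * (((m a₀ : ℂ) + 1) * momc q c m m) := by ring
        _ = (((∑ r, m r).factorial : ℕ) : ℂ) * ((m b : ℂ) * momc q c m' m') := by rw [hrel]
        _ = (m b : ℂ) * ((((∑ r, m' r).factorial : ℕ) : ℂ) * momc q c m' m') := by
            rw [hsum']; ring
        _ = (m b : ℂ) * (((∏ r, (m' r).factorial : ℕ) : ℂ) *
              momc q c (nu hd (∑ r, m' r)) (nu hd (∑ r, m' r))) := by rw [ih']
        _ = (((m b * ∏ r, (m' r).factorial : ℕ) : ℂ)) *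
              momc q c (nu hd (∑ r, m r)) (nu hd (∑ r, m r)) := by
            rw [hsum']; push_cast; ring
        _ = ((((m a₀ + 1) * ∏ r, (m r).factorial : ℕ) : ℂ)) *
              momc q c (nu hd (∑ r, m r)) (nu hd (∑ r, m r)) := by rw [hfacnat]
        _ = ((m a₀ : ℂ) + 1) * (((∏ r, (m r).factorial : ℕ) : ℂ) *
              momc q c (nu hd (∑ r, m r)) (nu hd (∑ r, m r))) := by push_cast; ring

lemma step2 {q : Measure (UG d)} [IsProbabilityMeasure q]
    (hinv : ∀ V : UG d, Measure.map (fun U => V * U) q = q) (c : Fin d) (hd : 0 < d) (N : ℕ) :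
    (((N + d - 1).factorial : ℕ) : ℂ) * momc q c (nu hd N) (nu hd N)
      = ((N.factorial : ℕ) : ℂ) * (((d - 1).factorial : ℕ) : ℂ) := by
  induction N with
  | zero =>
    have h0 : nu hd 0 = fun _ : Fin d => 0 := by funext r; simp [nu]
    rw [h0, momc_zero]
    rw [show 0 + d - 1 = d - 1 from by omega]
    simp
  | succ N ih =>
    set a₀ : Fin d := ⟨0, hd⟩ with ha₀
    have hsum := momc_sum_inc (q := q) c (nu hd N) (nu hd N)
    have hkey : ∀ b : Fin d,
        (((N + 1).factorial : ℕ) : ℂ) * momc q c (inc (nu hd N) b) (inc (nu hd N) b)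
          = (((∏ r, (inc (nu hd N) b r).factorial) : ℕ) : ℂ) *
              momc q c (nu hd (N + 1)) (nu hd (N + 1)) := by
      intro b
      have h1 := step1 hinv c hd (N + 1) (inc (nu hd N) b) (by rw [sum_inc, sum_nu]; omega)
      rw [sum_inc, sum_nu] at h1
      exact h1
    have hprodb : ∀ b : Fin d, b ≠ a₀ →
        (∏ r, (inc (nu hd N) b r).factorial) = N.factorial := by
      intro b hb
      rw [Finset.prod_eq_single a₀ (fun r _ hr => by
          have hval : inc (nu hd N) b r = if r = b then 1 else 0 := by simp [inc, nu, hr, ← ha₀]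
          rw [hval]
          by_cases h : r = b <;> simp [h])
        (fun habs => absurd (Finset.mem_univ a₀) habs)]
      rw [show inc (nu hd N) b a₀ = N from by
        rw [show (inc (nu hd N) b) a₀ = nu hd N a₀ + if a₀ = b then 1 else 0 from rfl]
        rw [if_neg (fun h : a₀ = b => hb h.symm)]
        simp [nu, ← ha₀]]
    have hinca₀ : inc (nu hd N) a₀ = nu hd (N + 1) := by
      funext r
      by_cases h : r = a₀ <;> simp [inc, nu, h, ← ha₀]
    have hcoefsum : (∑ b : Fin d, ((∏ r, (inc (nu hd N) b r).factorial : ℕ) : ℂ))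
        = (((N + 1).factorial + (d - 1) * N.factorial : ℕ) : ℂ) := by
      rw [← Finset.add_sum_erase _ _ (Finset.mem_univ a₀)]
      rw [show ((∏ r, (inc (nu hd N) a₀ r).factorial : ℕ) : ℂ)
          = (((N + 1).factorial : ℕ) : ℂ) from by rw [hinca₀, prod_factorial_nu]]
      have hcongr2 : (∑ b ∈ Finset.univ.erase a₀, ((∏ r, (inc (nu hd N) b r).factorial : ℕ) : ℂ))
          = ∑ _b ∈ Finset.univ.erase a₀, ((N.factorial : ℕ) : ℂ) :=
        Finset.sum_congr rfl (fun b hb => by rw [hprodb b (Finset.mem_erase.mp hb).1])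
      rw [hcongr2]
      rw [Finset.sum_const, Finset.card_erase_of_mem (Finset.mem_univ a₀)]
      simp only [Finset.card_univ, Fintype.card_fin, nsmul_eq_mul]
      push_cast
      ring
    have hmain : (((N + 1).factorial : ℕ) : ℂ) * momc q c (nu hd N) (nu hd N)
        = (((N + 1).factorial + (d - 1) * N.factorial : ℕ) : ℂ) *
            momc q c (nu hd (N + 1)) (nu hd (N + 1)) := by
      calc (((N + 1).factorial : ℕ) : ℂ) * momc q c (nu hd N) (nu hd N)
          = (((N + 1).factorial : ℕ) : ℂ) *
              ∑ b, momc q c (inc (nu hd N) b) (inc (nu hd N) b) := by rw [hsum]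
        _ = ∑ b, (((N + 1).factorial : ℕ) : ℂ) *
              momc q c (inc (nu hd N) b) (inc (nu hd N) b) := by rw [Finset.mul_sum]
        _ = ∑ b, ((∏ r, (inc (nu hd N) b r).factorial : ℕ) : ℂ) *
              momc q c (nu hd (N + 1)) (nu hd (N + 1)) :=
            Finset.sum_congr rfl fun b _ => hkey b
        _ = (∑ b : Fin d, ((∏ r, (inc (nu hd N) b r).factorial : ℕ) : ℂ)) *
              momc q c (nu hd (N + 1)) (nu hd (N + 1)) := by rw [← Finset.sum_mul]
        _ = (((N + 1).factorial + (d - 1) * N.factorial : ℕ) : ℂ) *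
              momc q c (nu hd (N + 1)) (nu hd (N + 1)) := by rw [hcoefsum]
    have harith : ((N + 1).factorial + (d - 1) * N.factorial) = N.factorial * (N + d) := by
      have h2 : (N + 1) + (d - 1) = N + d := by omega
      calc (N + 1).factorial + (d - 1) * N.factorial
          = N.factorial * ((N + 1) + (d - 1)) := by rw [Nat.factorial_succ]; ring
        _ = N.factorial * (N + d) := by rw [h2]
    rw [harith] at hmain
    have hidx : N + 1 + d - 1 = N + d := by omega
    rw [hidx]
    have hNd : (N + d).factorial = (N + d) * (N + d - 1).factorial := by
      conv_lhs => rw [show N + d = (N + d - 1) + 1 from by omega]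
      rw [Nat.factorial_succ, show (N + d - 1) + 1 = N + d from by omega]
    apply mul_left_cancel₀
      (show ((N.factorial : ℕ) : ℂ) ≠ 0 from Nat.cast_ne_zero.mpr (Nat.factorial_ne_zero N))
    calc ((N.factorial : ℕ) : ℂ) * ((((N + d).factorial : ℕ) : ℂ) *
          momc q c (nu hd (N + 1)) (nu hd (N + 1)))
        = (((N + d - 1).factorial : ℕ) : ℂ) *
            ((((N.factorial * (N + d)) : ℕ) : ℂ) * momc q c (nu hd (N + 1)) (nu hd (N + 1))) := by
          rw [hNd]; push_cast; ring
      _ = (((N + d - 1).factorial : ℕ) : ℂ) * ((((N + 1).factorial : ℕ) : ℂ) *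
            momc q c (nu hd N) (nu hd N)) := by rw [← hmain]
      _ = (((N + 1).factorial : ℕ) : ℂ) * ((((N + d - 1).factorial : ℕ) : ℂ) *
            momc q c (nu hd N) (nu hd N)) := by ring
      _ = (((N + 1).factorial : ℕ) : ℂ) * (((N.factorial : ℕ) : ℂ) *
            (((d - 1).factorial : ℕ) : ℂ)) := by rw [ih]
      _ = ((N.factorial : ℕ) : ℂ) * ((((N + 1).factorial : ℕ) : ℂ) *
            (((d - 1).factorial : ℕ) : ℂ)) := by ring

lemma momFormula {q : Measure (UG d)} [IsProbabilityMeasure q]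
    (hinv : ∀ V : UG d, Measure.map (fun U => V * U) q = q) (c : Fin d) (hd : 0 < d)
    (m : Fin d → ℕ) :
    ((((∑ r, m r) + d - 1).factorial : ℕ) : ℂ) * momc q c m m
      = ((∏ r, (m r).factorial : ℕ) : ℂ) * (((d - 1).factorial : ℕ) : ℂ) := by
  have h1 := step1 hinv c hd (∑ r, m r) m (by omega)
  have h2 := step2 hinv c hd (∑ r, m r)
  apply mul_left_cancel₀ (show (((∑ r, m r).factorial : ℕ) : ℂ) ≠ 0 from
    Nat.cast_ne_zero.mpr (Nat.factorial_ne_zero _))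
  calc (((∑ r, m r).factorial : ℕ) : ℂ) *
        (((((∑ r, m r) + d - 1).factorial : ℕ) : ℂ) * momc q c m m)
      = ((((∑ r, m r) + d - 1).factorial : ℕ) : ℂ) *
          ((((∑ r, m r).factorial : ℕ) : ℂ) * momc q c m m) := by ring
    _ = ((((∑ r, m r) + d - 1).factorial : ℕ) : ℂ) *
          (((∏ r, (m r).factorial : ℕ) : ℂ) *
            momc q c (nu hd (∑ r, m r)) (nu hd (∑ r, m r))) := by rw [h1]
    _ = ((∏ r, (m r).factorial : ℕ) : ℂ) *
          (((((∑ r, m r) + d - 1).factorial : ℕ) : ℂ) *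
            momc q c (nu hd (∑ r, m r)) (nu hd (∑ r, m r))) := by ring
    _ = ((∏ r, (m r).factorial : ℕ) : ℂ) *
          ((((∑ r, m r).factorial : ℕ) : ℂ) * (((d - 1).factorial : ℕ) : ℂ)) := by rw [h2]
    _ = (((∑ r, m r).factorial : ℕ) : ℂ) *
          (((∏ r, (m r).factorial : ℕ) : ℂ) * (((d - 1).factorial : ℕ) : ℂ)) := by ring

/-! #### Permutation counting -/

lemma typ_comp_perm {N : ℕ} (x : Fin N → Fin d) (π : Equiv.Perm (Fin N)) (a : Fin d) :
    typ (x ∘ π) a = typ x a := by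
  rw [typ, typ, ← Fintype.card_subtype, ← Fintype.card_subtype]
  exact Fintype.card_congr (Equiv.subtypeEquiv π (fun i => Iff.rfl))

lemma exists_perm_of_typ_eq {N : ℕ} {x y : Fin N → Fin d} (h : typ x = typ y) :
    ∃ π : Equiv.Perm (Fin N), x ∘ π = y := by
  have hcard : ∀ a, Fintype.card {i // y i = a} = Fintype.card {i // x i = a} := by
    intro a
    rw [Fintype.card_subtype, Fintype.card_subtype]
    exact (congrFun h a).symm
  let F : ∀ a, {i // y i = a} ≃ {i // x i = a} := fun a => Fintype.equivOfCardEq (hcard a)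
  refine ⟨(Equiv.sigmaFiberEquiv y).symm.trans
    ((Equiv.sigmaCongrRight F).trans (Equiv.sigmaFiberEquiv x)), ?_⟩
  funext i
  exact (F (y i) ⟨i, rfl⟩).2

lemma card_stab {N : ℕ} (x : Fin N → Fin d) :
    Fintype.card {π : Equiv.Perm (Fin N) // x ∘ π = x} = ∏ a, (typ x a).factorial := by
  have e : {π : Equiv.Perm (Fin N) // x ∘ π = x} ≃ ∀ a, Equiv.Perm {i // x i = a} := by
    refine ⟨fun p a => Equiv.subtypeEquiv p.1 (fun i => ?_),
      fun σ => ⟨(Equiv.sigmaFiberEquiv x).symm.trans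
        ((Equiv.sigmaCongrRight σ).trans (Equiv.sigmaFiberEquiv x)), ?_⟩, ?_, ?_⟩
    · have hpi : x (p.1 i) = x i := congrFun p.2 i
      rw [hpi]
    · funext i
      exact (σ (x i) ⟨i, rfl⟩).2
    · intro p
      apply Subtype.ext
      apply Equiv.ext
      intro i
      rfl
    · intro σ
      funext a
      apply Equiv.ext
      intro j
      obtain ⟨i, hi⟩ := j
      apply Subtype.ext
      subst hi
      rfl
  rw [Fintype.card_congr e, Fintype.card_pi]
  apply Finset.prod_congr rfl
  intro a _
  rw [Fintype.card_perm, Fintype.card_subtype]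
  rfl

lemma card_perm_sending {N : ℕ} (x y : Fin N → Fin d) :
    (Finset.univ.filter fun π : Equiv.Perm (Fin N) => y = x ∘ π).card
      = if typ x = typ y then ∏ a, (typ x a).factorial else 0 := by
  by_cases h : typ x = typ y
  · rw [if_pos h]
    obtain ⟨π₀, hπ₀⟩ := exists_perm_of_typ_eq h
    rw [← card_stab x, ← Fintype.card_subtype]
    apply Fintype.card_congr
    refine ⟨fun p => ⟨p.1 * π₀⁻¹, ?_⟩, fun s => ⟨s.1 * π₀, ?_⟩, ?_, ?_⟩
    · funext i
      show x (p.1 (π₀⁻¹ i)) = x i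
      have h1 : y (π₀⁻¹ i) = x (p.1 (π₀⁻¹ i)) := congrFun p.2 (π₀⁻¹ i)
      have h2 : x (π₀ (π₀⁻¹ i)) = y (π₀⁻¹ i) := congrFun hπ₀ (π₀⁻¹ i)
      calc x (p.1 (π₀⁻¹ i)) = y (π₀⁻¹ i) := h1.symm
        _ = x (π₀ (π₀⁻¹ i)) := h2.symm
        _ = x i := by simp
    · funext i
      show y i = x (s.1 (π₀ i))
      have h1 : x (s.1 (π₀ i)) = x (π₀ i) := congrFun s.2 (π₀ i)
      have h2 : x (π₀ i) = y i := congrFun hπ₀ i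
      rw [h1, h2]
    · intro s
      apply Subtype.ext
      show s.1 * π₀⁻¹ * π₀ = s.1
      group
    · intro p
      apply Subtype.ext
      show p.1 * π₀ * π₀⁻¹ = p.1
      group
  · rw [if_neg h]
    rw [Finset.card_eq_zero, Finset.filter_eq_empty_iff]
    intro π _
    intro hy
    apply h
    subst hy
    exact funext fun a => (typ_comp_perm x π a).symm

end HWAux

/-- `∫ U^{⊗n} |e_(n)⟩⟨e_(n)| (U^{⊗n})^† dU = Π_{(n)} / binom(n+d-1, n)`. -/
theorem haar_average_constant_word (d n : ℕ) (hd : 1 ≤ d) (hn : 1 ≤ n)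
    (haar : Measure (UG d)) [IsProbabilityMeasure haar]
    (hinv : ∀ V : UG d, Measure.map (fun U => V * U) haar = haar) :
    rhoEQ d n (by omega) haar = (((n + d - 1).choose n : ℂ))⁻¹ • symmetrizer d n := by
  classical
  have hd0 : 0 < d := hd
  have hword : ∀ h : 0 < d,
      word d n (muEq d n h) (muEq_sum d n h) = fun _ => (⟨0, h⟩ : Fin d) := by
    intro h
    have hlen : (wordList d (muEq d n h)).length = n := by
      rw [wordList_length, muEq_sum]
    have hmem : ∀ b ∈ wordList d (muEq d n h), b = (⟨0, h⟩ : Fin d) := by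
      intro b hb
      rw [wordList] at hb
      rw [List.mem_flatten] at hb
      obtain ⟨l, hl, hbl⟩ := hb
      rw [List.mem_ofFn] at hl
      obtain ⟨i, hi⟩ := hl
      rw [← hi] at hbl
      have hb1 := List.eq_of_mem_replicate hbl
      have hb2 := (List.mem_replicate.mp hbl).1
      have : i = (⟨0, h⟩ : Fin d) := by
        by_contra hcon
        rw [muEq, if_neg hcon] at hb2
        exact hb2 rfl
      rw [hb1, this]
    have hlist : wordList d (muEq d n h) = List.replicate n (⟨0, h⟩ : Fin d) :=
      List.eq_replicate_iff.mpr ⟨hlen, hmem⟩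
    funext j
    rw [word]
    rw [List.get_of_eq hlist]
    simp
  apply Matrix.ext
  intro x y
  have hL : rhoEQ d n hd0 haar x y
      = HWAux.momc haar (⟨0, hd0⟩ : Fin d) (HWAux.typ x) (HWAux.typ y) := by
    show rhoWord d n (word d n (muEq d n hd0) (muEq_sum d n hd0)) haar x y = _
    rw [hword]
    exact HWAux.rhoWord_entry _ haar x y
  rw [show rhoEQ d n (by omega : 0 < d) haar x y = rhoEQ d n hd0 haar x y from rfl, hL]
  have hR : ((((n + d - 1).choose n : ℂ))⁻¹ • symmetrizer d n) x y
      = (((n + d - 1).choose n : ℂ))⁻¹ * (((n.factorial : ℂ))⁻¹ *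
          (((if HWAux.typ x = HWAux.typ y then ∏ a, (HWAux.typ x a).factorial else 0 : ℕ)) : ℂ)) := by
    rw [Matrix.smul_apply, smul_eq_mul]
    congr 1
    rw [symmetrizer, Matrix.smul_apply, smul_eq_mul]
    congr 1
    rw [Matrix.sum_apply]
    rw [show (∑ π : Equiv.Perm (Fin n), psi d n π x y)
        = ∑ π : Equiv.Perm (Fin n), if y = x ∘ π then (1:ℂ) else 0 from rfl]
    rw [Finset.sum_boole]
    rw [HWAux.card_perm_sending x y]
  rw [hR]
  by_cases h : HWAux.typ x = HWAux.typ y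
  · rw [if_pos h, ← h]
    have hsum : ∑ r, HWAux.typ x r = n := HWAux.sum_typ x
    have hkey := HWAux.momFormula hinv (⟨0, hd0⟩ : Fin d) hd0 (HWAux.typ x)
    rw [hsum] at hkey
    have hcc : ((n + d - 1).factorial : ℂ)
        = ((n + d - 1).choose n : ℂ) * (n.factorial : ℂ) * ((d - 1).factorial : ℂ) := by
      have h2 := Nat.choose_mul_factorial_mul_factorial (show n ≤ n + d - 1 by omega)
      rw [show n + d - 1 - n = d - 1 from by omega] at h2
      exact_mod_cast h2.symm
    have hne1 : ((n + d - 1).choose n : ℂ) ≠ 0 :=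
      Nat.cast_ne_zero.mpr (Nat.choose_pos (by omega)).ne'
    have hne2 : ((n.factorial : ℂ)) ≠ 0 := Nat.cast_ne_zero.mpr (Nat.factorial_ne_zero n)
    have hne3 : (((d - 1).factorial : ℂ)) ≠ 0 := Nat.cast_ne_zero.mpr (Nat.factorial_ne_zero _)
    have hne4 : ((n + d - 1).factorial : ℂ) ≠ 0 := Nat.cast_ne_zero.mpr (Nat.factorial_ne_zero _)
    apply mul_left_cancel₀ hne4
    rw [hkey]
    rw [hcc]
    field_simp
  · rw [if_neg h]
    rw [HWAux.momc_vanish hinv _ h]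
    simp

end
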